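/- There exists a constant B > 0 (depending only on n, λ and σ_a) such that for every initial state α = (α_1,…,α_n,l) ∈ 𝒜: E_α[ Σ_{i=1}^n Q_i(τ_0)² ] ≤ B · (max(max_{1≤i≤n} α_i, 1))². In particular, E_α[L(X(τ_0))] = E_α[Σ_{i=1}^n Q_i(τ_0)^{1+γ}] is finite for every γ ∈ (0,1]. -/

import Mathlib

open MeasureTheory ENNReal Filter ProbabilityTheory

namespace PI

/-- The state space of the PI chain: queue lengths and identity of the Last-Idle server. -/
abbrev State (n : ℕ) := (Fin n → ℕ) × Fin n

/-- The set of idle servers for the queue-length vector `q`. -/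
def idleSet {n : ℕ} (q : Fin n → ℕ) : Finset (Fin n) := Finset.univ.filter (fun i => q i = 0)

/-- One step of the PI dynamics: given the current state `x`, the incoming batch size `batch`,
the service capacities `svc` and the uniform tie-breaking noise `u` (converted into a uniform
choice among the idle servers by `choice`).  The new Last-Idle server is chosen uniformly among
the currently idle servers if there are any (otherwise it is unchanged), the whole batch joins
its queue, and then every server serves up to its capacity (`ℕ`-subtraction is truncated,
realizing the positive part `[·]⁺`). -/
def step {n : ℕ} (choice : Finset (Fin n) → ℝ → Fin n)
    (x : State n) (batch : ℕ) (svc : Fin n → ℕ) (u : ℝ) : State n :=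
  let l := if (idleSet x.1).Nonempty then choice (idleSet x.1) u else x.2
  (fun i => x.1 i + (if l = i then batch else 0) - svc i, l)

/-- The PI trajectory `X = (Q, LI)` started from `α`; the step from time `t` to `t+1`
(i.e. time slot `t+1`) uses the noise of index `t`. -/
def traj {n : ℕ} {Ω : Type} (choice : Finset (Fin n) → ℝ → Fin n)
    (a : ℕ → Ω → ℕ) (s : Fin n → ℕ → Ω → ℕ) (U : ℕ → Ω → ℝ)
    (α : State n) : ℕ → Ω → State n
  | 0 => fun _ => α
  | (t+1) => fun ω => step choice (traj choice a s U α t ω) (a t ω) (fun i => s i t ω) (U t ω)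

/-- Index type for the driving noise: arrivals, services, tie-breaking uniforms. -/
def NoiseIdx (n : ℕ) := (ℕ ⊕ (Fin n × ℕ)) ⊕ ℕ

/-- Value type of each noise coordinate. -/
def NoiseType {n : ℕ} : NoiseIdx n → Type
  | .inl (.inl _) => ℕ
  | .inl (.inr _) => ℕ
  | .inr _ => ℝ

instance {n : ℕ} : ∀ k : NoiseIdx n, MeasurableSpace (NoiseType k)
  | .inl (.inl _) => inferInstanceAs (MeasurableSpace ℕ)
  | .inl (.inr _) => inferInstanceAs (MeasurableSpace ℕ)
  | .inr _ => inferInstanceAs (MeasurableSpace ℝ)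

/-- The combined noise family (arrivals, services, tie-breaking uniforms). -/
def noise {n : ℕ} {Ω : Type} (a : ℕ → Ω → ℕ) (s : Fin n → ℕ → Ω → ℕ)
    (U : ℕ → Ω → ℝ) : ∀ k : NoiseIdx n, Ω → NoiseType k
  | .inl (.inl t) => a t
  | .inl (.inr p) => s p.1 p.2
  | .inr t => U t

/-- The empty state with Last-Idle server `i`. -/
def emptyState {n : ℕ} (i : Fin n) : State n := (fun _ => 0, i)

/-- First time `t ≥ 1` at which the process `X` lies in `B` (with value `∞ ∈ ℝ≥0∞`
if this never happens). -/
noncomputable def hitTime {n : ℕ} {Ω : Type} (X : ℕ → Ω → State n)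
    (B : Set (State n)) (ω : Ω) : ℝ≥0∞ :=
  sInf {x : ℝ≥0∞ | ∃ t : ℕ, 1 ≤ t ∧ X t ω ∈ B ∧ x = (t : ℝ≥0∞)}

/-- The event `Ω_t`: some server other than the Last-Idle server is idle. -/
def boundaryEvt {n : ℕ} (x : State n) : Prop := ∃ i, i ≠ x.2 ∧ x.1 i = 0

/-- The sampling times `τ_k`: the successive (random) times `t ≥ 1` at which `Ω_t` occurs. -/
noncomputable def sampleTime {n : ℕ} {Ω : Type} (X : ℕ → Ω → State n) : ℕ → Ω → ℕ
  | 0 => fun ω => sInf {t | 1 ≤ t ∧ boundaryEvt (X t ω)}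
  | (k+1) => fun ω => sInf {t | sampleTime X k ω < t ∧ boundaryEvt (X t ω)}

/-- The sampled chain `Y_k = X (τ_k)`. -/
noncomputable def sampled {n : ℕ} {Ω : Type} (X : ℕ → Ω → State n) (k : ℕ) (ω : Ω) : State n :=
  X (sampleTime X k ω) ω

/-- The tie-breaking variable `ξ_t`, `t ≥ 1`: the uniform choice among the servers idle at
time `t − 1` (which is the new Last-Idle server when some server is idle at `t − 1`). -/
def xi {n : ℕ} {Ω : Type} (choice : Finset (Fin n) → ℝ → Fin n) (U : ℕ → Ω → ℝ)
    (X : ℕ → Ω → State n) (t : ℕ) (ω : Ω) : Fin n :=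
  choice (idleSet ((X (t - 1) ω).1)) (U (t - 1) ω)

/-- The σ-algebra `ℱ^ξ_t = σ(X 0, …, X t, ξ 1, …, ξ (t+1))`. -/
noncomputable def filtXi {n : ℕ} {Ω : Type} (choice : Finset (Fin n) → ℝ → Fin n)
    (U : ℕ → Ω → ℝ) (X : ℕ → Ω → State n) (t : ℕ) : MeasurableSpace Ω :=
  (⨆ r ∈ Set.Iic t, MeasurableSpace.comap (X r) ⊤) ⊔
    (⨆ r ∈ Set.Iic t, MeasurableSpace.comap (xi choice U X (r + 1)) ⊤)

/-- The Lyapunov function `L α = ∑ i, (α i) ^ (1 + γ)` (valued in `ℝ≥0∞`). -/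
noncomputable def lyap {n : ℕ} (γ : ℝ) (x : State n) : ℝ≥0∞ :=
  ∑ i, (x.1 i : ℝ≥0∞) ^ ((1 : ℝ) + γ)

/-- `σ = inf {k ≥ 0 : Y_k ∈ A}`, the first sampling index at which the sampled chain is in
`A` (`∞ ∈ ℕ∞` if there is none). -/
noncomputable def hitIdx {n : ℕ} {Ω : Type} (X : ℕ → Ω → State n)
    (A : Set (State n)) (ω : Ω) : ℕ∞ :=
  sInf {k : ℕ∞ | ∃ m : ℕ, k = (m : ℕ∞) ∧ sampled X m ω ∈ A}

end PI

section Helpers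

open PI

private lemma pi_step_snd' {n : ℕ} (choice : Finset (Fin n) → ℝ → Fin n) (x : State n) (b : ℕ)
    (svc : Fin n → ℕ) (u : ℝ) :
    (step choice x b svc u).2 = if (idleSet x.1).Nonempty then choice (idleSet x.1) u else x.2 := rfl

private lemma pi_step_fst' {n : ℕ} (choice : Finset (Fin n) → ℝ → Fin n) (x : State n) (b : ℕ)
    (svc : Fin n → ℕ) (u : ℝ) (i : Fin n) :
    (step choice x b svc u).1 i
      = x.1 i + (if (step choice x b svc u).2 = i then b else 0) - svc i := rfl

private lemma pi_traj_fst_le {n : ℕ} {Ω : Type} (choice : Finset (Fin n) → ℝ → Fin n)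
    (a : ℕ → Ω → ℕ) (s : Fin n → ℕ → Ω → ℕ) (U : ℕ → Ω → ℝ) (α : State n) (ω : Ω) :
    ∀ t i, (traj choice a s U α t ω).1 i ≤ α.1 i + ∑ r ∈ Finset.range t, a r ω := by
  intro t
  induction t with
  | zero => simp [traj]
  | succ t ih =>
    intro i
    have h1 : (traj choice a s U α (t+1) ω).1 i ≤ (traj choice a s U α t ω).1 i + a t ω := by
      show (step choice _ _ _ _).1 i ≤ _
      refine (Nat.sub_le _ _).trans (Nat.add_le_add_left ?_ _)
      split <;> split <;> simp
    calc (traj choice a s U α (t+1) ω).1 i ≤ (traj choice a s U α t ω).1 i + a t ω := h1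
      _ ≤ (α.1 i + ∑ r ∈ Finset.range t, a r ω) + a t ω := Nat.add_le_add_right (ih i) _
      _ = α.1 i + ∑ r ∈ Finset.range (t+1), a r ω := by rw [Finset.sum_range_succ, Nat.add_assoc]

private lemma pi_exists_boundary {n : ℕ} (hn : 2 ≤ n) {Ω : Type}
    (choice : Finset (Fin n) → ℝ → Fin n)
    (a : ℕ → Ω → ℕ) (s : Fin n → ℕ → Ω → ℕ) (U : ℕ → Ω → ℝ) (α : State n) (ω : Ω)
    (M : ℕ) (hM1 : 1 ≤ M) (hMα : ∀ i, α.1 i ≤ M)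
    (H1 : ∀ t < M, ∀ i, 1 ≤ s i t ω)
    (H2 : ∀ t < M, ∀ j : Fin n, choice {j} (U t ω) = j) :
    ∃ t, 1 ≤ t ∧ t ≤ M ∧ boundaryEvt (traj choice a s U α t ω) := by
  by_contra hcon
  push_neg at hcon
  set X : ℕ → State n := fun t => traj choice a s U α t ω with hX
  have hnb : ∀ t, 1 ≤ t → t ≤ M → ∀ i, i ≠ (X t).2 → (X t).1 i ≠ 0 := by
    intro t h1 h2 i hi h0
    exact (hcon t h1 h2) ⟨i, hi, h0⟩
  have hl : ∀ t, 1 ≤ t → t ≤ M → (X t).2 = (X 1).2 := by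
    intro t
    induction t with
    | zero => omega
    | succ t ih =>
      intro h1 h2
      rcases Nat.eq_or_lt_of_le h1 with h | h
      · simp [← h]
      · have ht1 : 1 ≤ t := by omega
        have htM : t < M := by omega
        have : (X (t+1)).2 = (X t).2 := by
          show (step choice (X t) (a t ω) (fun i => s i t ω) (U t ω)).2 = (X t).2
          rw [pi_step_snd']
          split
          · rename_i hne
            have hsub : idleSet (X t).1 ⊆ {(X t).2} := by
              intro i hi
              simp only [idleSet, Finset.mem_filter] at hi
              rcases eq_or_ne i (X t).2 with h | h
              · simp [h]
              · exact absurd hi.2 (hnb t ht1 (le_of_lt htM) i h)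
            rcases Finset.subset_singleton_iff.mp hsub with h | h
            · exact absurd h (Finset.nonempty_iff_ne_empty.mp hne)
            · rw [h]; exact H2 t htM _
          · rfl
        rw [this]; exact ih ht1 (by omega)
  obtain ⟨j, hj⟩ : ∃ j : Fin n, j ≠ (X 1).2 := by
    rcases Decidable.eq_or_ne (⟨0, by omega⟩ : Fin n) (X 1).2 with h | h
    · exact ⟨⟨1, by omega⟩, by rw [← h]; simp [Fin.ext_iff]⟩
    · exact ⟨_, h⟩
  have hq : ∀ t, 1 ≤ t → t ≤ M → (X t).1 j ≤ α.1 j - t := by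
    intro t
    induction t with
    | zero => omega
    | succ t ih =>
      intro _ h2
      have hlj : (X (t+1)).2 ≠ j := by
        rw [hl (t+1) (by omega) h2]; exact fun h => hj h.symm
      have hstep : (X (t+1)).1 j = (X t).1 j + 0 - s j t ω := by
        show (step choice (X t) (a t ω) (fun i => s i t ω) (U t ω)).1 j = _
        rw [pi_step_fst']
        congr 1
        rw [if_neg]
        exact hlj
      rw [hstep, Nat.add_zero]
      have hs1 : 1 ≤ s j t ω := H1 t (by omega) j
      rcases Nat.eq_zero_or_pos t with h | h
      · subst h
        have hx0 : (X 0).1 j = α.1 j := rfl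
        omega
      · have hih := ih h (by omega)
        omega
  set t₀ := max (α.1 j) 1 with ht₀
  have h1 : 1 ≤ t₀ := le_max_right _ _
  have h2 : t₀ ≤ M := max_le (hMα j) hM1
  have h0 : (X t₀).1 j = 0 := by
    have ha := hq t₀ h1 h2
    have hb : α.1 j - t₀ = 0 := by omega
    omega
  exact hnb t₀ h1 h2 j (by rw [hl t₀ h1 h2]; exact hj) h0

end Helpers

/-- **Second-moment bound on the queue lengths at the first sampling time** (eqs. (qmax
bound)–(finiteness of second term)).  There is a constant `B > 0` such that for every initial
state `α ∈ 𝒜`, `E_α [ ∑ i, Q_i(τ_0)² ] ≤ B (max (max_i α_i) 1)²`.  In particular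
`E_α [L (X (τ_0))] = E_α [∑ i, Q_i(τ_0)^(1+γ)]` is finite for every `γ ∈ (0,1]`. -/
theorem pi_second_moment_at_first_sample
    {n : ℕ} (hn : 2 ≤ n) {Ω : Type} [MeasurableSpace Ω]
    -- `P α` is the law of the system driven by the noise below, started at `X 0 = α`
    (P : PI.State n → Measure Ω) (hP : ∀ α, IsProbabilityMeasure (P α))
    (a : ℕ → Ω → ℕ) (s : Fin n → ℕ → Ω → ℕ) (U : ℕ → Ω → ℝ)
    (choice : Finset (Fin n) → ℝ → Fin n)
    (νa : Measure ℕ) (νs : Fin n → Measure ℕ)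
    (lam σa : ℝ) (μ : Fin n → ℝ) (smax : ℕ)
    (ha_meas : ∀ t, Measurable (a t)) (hs_meas : ∀ i t, Measurable (s i t))
    (hU_meas : ∀ t, Measurable (U t)) (hchoice_meas : ∀ I, Measurable (choice I))
    -- the arrivals are i.i.d. with law `νa`, the services of server `i` i.i.d. with law `νs i`,
    -- the tie-breaking noise is uniform on `[0,1]`, and all are mutually independent,
    -- under every starting state
    (ha_law : ∀ α t, Measure.map (a t) (P α) = νa)
    (hs_law : ∀ α i t, Measure.map (s i t) (P α) = νs i)
    (hU_law : ∀ α t, Measure.map (U t) (P α) = volume.restrict (Set.Icc (0:ℝ) 1))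
    (hindep : ∀ α, iIndepFun (PI.noise a s U) (P α))
    -- `P(a(1) = 0) > 0`, `E[a(1)] = λ`, `Var(a(1)) = σa² < ∞`
    (ha0 : νa {0} ≠ 0)
    (ha_mean : ∫⁻ k, (k : ℝ≥0∞) ∂νa = ENNReal.ofReal lam)
    (ha_var : ∫⁻ k, ((k : ℝ≥0∞)) ^ 2 ∂νa = ENNReal.ofReal (lam ^ 2 + σa ^ 2))
    -- `1 ≤ s i t ≤ smax` and `E[s i t] = μ i`
    (hs_bdd : ∀ i, (νs i) {k : ℕ | ¬(1 ≤ k ∧ k ≤ smax)} = 0)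
    (hs_mean : ∀ i, ∫⁻ k, (k : ℝ≥0∞) ∂(νs i) = ENNReal.ofReal (μ i))
    -- `choice I` applied to a uniform `[0,1]` variable is uniform on `I`
    (hchoice_unif : ∀ I : Finset (Fin n), I.Nonempty → ∀ i ∈ I,
      (volume.restrict (Set.Icc (0:ℝ) 1)) {u | choice I u = i} = (I.card : ℝ≥0∞)⁻¹)
    :
    ∀ X : PI.State n → ℕ → Ω → PI.State n, X = PI.traj choice a s U →
    ∀ 𝒜 : Set (PI.State n),
      𝒜 = {β | ∃ i : Fin n, ∃ t : ℕ,
              P (PI.emptyState i) {ω | X (PI.emptyState i) t ω = β} ≠ 0} →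
    (∃ B : ℝ, 0 < B ∧
      ∀ α ∈ 𝒜,
        ∫⁻ ω, ∑ i, ((X α (PI.sampleTime (X α) 0 ω) ω).1 i : ℝ≥0∞) ^ 2 ∂(P α)
          ≤ ENNReal.ofReal B * ((max (Finset.univ.sup α.1) 1 : ℕ) : ℝ≥0∞) ^ 2) ∧
    (∀ γ : ℝ, 0 < γ → γ ≤ 1 → ∀ α ∈ 𝒜,
      ∫⁻ ω, PI.lyap γ (X α (PI.sampleTime (X α) 0 ω) ω) ∂(P α) ≠ ⊤) := by
  intro X hX 𝒜 h𝒜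
  haveI : ∀ α, IsProbabilityMeasure (P α) := hP
  have hC : (0:ℝ) ≤ lam^2 + σa^2 := by positivity
  set C : ℝ := lam^2 + σa^2 with hCdef
  set B : ℝ := ((2*n : ℕ) : ℝ) * (1 + C) with hBdef
  -- a.e. events
  have hs_as : ∀ α, ∀ᵐ ω ∂(P α), ∀ (t : ℕ) (i : Fin n), 1 ≤ s i t ω := by
    intro α
    rw [ae_all_iff]
    intro t
    rw [ae_all_iff]
    intro i
    rw [ae_iff]
    have h0 : P α {ω | ¬ (1 ≤ s i t ω ∧ s i t ω ≤ smax)} = 0 := by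
      have hb := hs_bdd i
      rw [← hs_law α i t, Measure.map_apply (hs_meas i t)
        (Set.to_countable _).measurableSet] at hb
      exact hb
    refine measure_mono_null (fun ω h => ?_) h0
    simp only [Set.mem_setOf_eq] at h ⊢
    tauto
  have hc_as : ∀ α, ∀ᵐ ω ∂(P α), ∀ (t : ℕ) (j : Fin n), choice {j} (U t ω) = j := by
    intro α
    rw [ae_all_iff]
    intro t
    rw [ae_all_iff]
    intro j
    rw [ae_iff]
    have hBm : MeasurableSet {u : ℝ | choice {j} u = j} :=
      (hchoice_meas {j}) (measurableSet_singleton j)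
    have h1 : (volume.restrict (Set.Icc (0:ℝ) 1)) {u | choice {j} u = j} = 1 := by
      rw [hchoice_unif {j} (Finset.singleton_nonempty j) j (Finset.mem_singleton_self j)]
      simp
    have h2 : P α (U t ⁻¹' {u | choice {j} u = j}) = 1 := by
      rw [← Measure.map_apply (hU_meas t) hBm, hU_law α t, h1]
    have he : {ω | ¬ choice {j} (U t ω) = j} = (U t ⁻¹' {u | choice {j} u = j})ᶜ := rfl
    rw [he, measure_compl ((hU_meas t) hBm) (measure_ne_top _ _), h2]
    simp
  -- the second moment of a single arrival
  have ha2 : ∀ α (r : ℕ), ∫⁻ ω, ((a r ω : ℝ≥0∞))^2 ∂(P α) = ENNReal.ofReal C := by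
    intro α r
    rw [← ha_var, ← ha_law α r, lintegral_map (f := fun k : ℕ => (k : ℝ≥0∞)^2)
      measurable_from_top (ha_meas r)]
  -- the key bound
  have key : ∀ α : PI.State n,
      ∫⁻ ω, ∑ i, ((X α (PI.sampleTime (X α) 0 ω) ω).1 i : ℝ≥0∞) ^ 2 ∂(P α)
        ≤ ENNReal.ofReal B * ((max (Finset.univ.sup α.1) 1 : ℕ) : ℝ≥0∞) ^ 2 := by
    intro α
    set M : ℕ := max (Finset.univ.sup α.1) 1 with hM
    have hM1 : 1 ≤ M := le_max_right _ _
    have hMα : ∀ i, α.1 i ≤ M :=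
      fun i => le_trans (Finset.le_sup (Finset.mem_univ i)) (le_max_left _ _)
    set S : Ω → ℕ := fun ω => ∑ r ∈ Finset.range M, a r ω with hS
    have hSmeas : Measurable S := Finset.measurable_sum _ (fun r _ => ha_meas r)
    have hSE : Measurable (fun ω => ((S ω : ℕ) : ℝ≥0∞)) := measurable_from_top.comp hSmeas
    -- pointwise a.e. bound
    have hpt : ∀ᵐ ω ∂(P α), ∑ i, ((X α (PI.sampleTime (X α) 0 ω) ω).1 i : ℝ≥0∞)^2
        ≤ ((n * (2*M^2 + 2*(S ω)^2) : ℕ) : ℝ≥0∞) := by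
      filter_upwards [hs_as α, hc_as α] with ω h1 h2
      obtain ⟨t₀, ht1, ht2, htb⟩ := pi_exists_boundary hn choice a s U α ω M hM1 hMα
        (fun t _ i => h1 t i) (fun t _ j => h2 t j)
      have hτ : PI.sampleTime (X α) 0 ω ≤ M := by
        have hmem : t₀ ∈ {t : ℕ | 1 ≤ t ∧ PI.boundaryEvt (X α t ω)} := ⟨ht1, by rw [hX]; exact htb⟩
        exact le_trans (Nat.sInf_le hmem) ht2
      set τ := PI.sampleTime (X α) 0 ω with hτdef
      have hq : ∀ i, (X α τ ω).1 i ≤ M + S ω := by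
        intro i
        have hle := pi_traj_fst_le choice a s U α ω τ i
        rw [← hX] at hle
        have hsum : ∑ r ∈ Finset.range τ, a r ω ≤ S ω :=
          Finset.sum_le_sum_of_subset (Finset.range_subset_range.mpr hτ)
        have := hMα i
        omega
      have hnat : ∑ i, ((X α τ ω).1 i)^2 ≤ n * (2*M^2 + 2*(S ω)^2) := by
        calc ∑ i, ((X α τ ω).1 i)^2 ≤ ∑ _i : Fin n, (M + S ω)^2 :=
              Finset.sum_le_sum (fun i _ => Nat.pow_le_pow_left (hq i) 2)
          _ = n * (M + S ω)^2 := by simp [Finset.sum_const, mul_comm]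
          _ ≤ n * (2*M^2 + 2*(S ω)^2) := Nat.mul_le_mul_left _ (by zify; nlinarith [sq_nonneg ((M:ℤ) - (S ω:ℤ))])
      calc ∑ i, ((X α τ ω).1 i : ℝ≥0∞)^2
          = ((∑ i, ((X α τ ω).1 i)^2 : ℕ) : ℝ≥0∞) := by push_cast; rfl
        _ ≤ ((n * (2*M^2 + 2*(S ω)^2) : ℕ) : ℝ≥0∞) := Nat.cast_le.mpr hnat
    -- Cauchy–Schwarz for S
    have hS2 : ∀ ω, ((S ω : ℝ≥0∞))^2
        ≤ (M : ℝ≥0∞) * ∑ r ∈ Finset.range M, ((a r ω : ℝ≥0∞))^2 := by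
      intro ω
      have hcs : (S ω)^2 ≤ M * ∑ r ∈ Finset.range M, (a r ω)^2 := by
        have := sq_sum_le_card_mul_sum_sq (s := Finset.range M) (f := fun r => a r ω)
        simpa using this
      calc ((S ω : ℝ≥0∞))^2 = (((S ω)^2 : ℕ) : ℝ≥0∞) := by push_cast; rfl
        _ ≤ ((M * ∑ r ∈ Finset.range M, (a r ω)^2 : ℕ) : ℝ≥0∞) := Nat.cast_le.mpr hcs
        _ = (M : ℝ≥0∞) * ∑ r ∈ Finset.range M, ((a r ω : ℝ≥0∞))^2 := by push_cast; rfl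
    have hIS : ∫⁻ ω, ((S ω : ℝ≥0∞))^2 ∂(P α) ≤ (M : ℝ≥0∞)^2 * ENNReal.ofReal C := by
      calc ∫⁻ ω, ((S ω : ℝ≥0∞))^2 ∂(P α)
          ≤ ∫⁻ ω, (M : ℝ≥0∞) * ∑ r ∈ Finset.range M, ((a r ω : ℝ≥0∞))^2 ∂(P α) :=
            lintegral_mono hS2
        _ = (M : ℝ≥0∞) * ∫⁻ ω, ∑ r ∈ Finset.range M, ((a r ω : ℝ≥0∞))^2 ∂(P α) :=
            lintegral_const_mul _ (Finset.measurable_sum _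
              (fun r _ => (measurable_from_top.comp (ha_meas r)).pow_const 2))
        _ = (M : ℝ≥0∞) * ∑ r ∈ Finset.range M, ∫⁻ ω, ((a r ω : ℝ≥0∞))^2 ∂(P α) := by
            rw [lintegral_finset_sum (Finset.range M)
              (f := fun (r : ℕ) (ω : Ω) => ((a r ω : ℕ) : ℝ≥0∞)^2)
              (fun r _ => (measurable_from_top.comp (ha_meas r)).pow_const 2)]
        _ = (M : ℝ≥0∞) * ((M : ℝ≥0∞) * ENNReal.ofReal C) := by
            simp [ha2 α, Finset.sum_const, mul_comm]
        _ = (M : ℝ≥0∞)^2 * ENNReal.ofReal C := by ring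
    -- put things together
    calc ∫⁻ ω, ∑ i, ((X α (PI.sampleTime (X α) 0 ω) ω).1 i : ℝ≥0∞) ^ 2 ∂(P α)
        ≤ ∫⁻ ω, ((n * (2*M^2 + 2*(S ω)^2) : ℕ) : ℝ≥0∞) ∂(P α) := lintegral_mono_ae hpt
      _ = ∫⁻ ω, ((n : ℝ≥0∞) * (2*(M : ℝ≥0∞)^2) + (n : ℝ≥0∞) * (2*((S ω : ℕ) : ℝ≥0∞)^2)) ∂(P α) := by
          refine lintegral_congr (fun ω => ?_)
          push_cast
          ring
      _ = (n : ℝ≥0∞) * (2*(M : ℝ≥0∞)^2)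
            + (n : ℝ≥0∞) * 2 * ∫⁻ ω, ((S ω : ℕ) : ℝ≥0∞)^2 ∂(P α) := by
          rw [lintegral_add_left measurable_const, lintegral_const, measure_univ, mul_one,
            ← lintegral_const_mul _ (hSE.pow_const 2)]
          congr 1
          refine lintegral_congr (fun ω => ?_)
          ring
      _ ≤ (n : ℝ≥0∞) * (2*(M : ℝ≥0∞)^2)
            + (n : ℝ≥0∞) * 2 * ((M : ℝ≥0∞)^2 * ENNReal.ofReal C) := by
          gcongr
      _ = ((2*n : ℕ) : ℝ≥0∞) * (1 + ENNReal.ofReal C) * (M : ℝ≥0∞)^2 := by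
          push_cast
          ring
      _ = ENNReal.ofReal B * (M : ℝ≥0∞)^2 := by
          rw [hBdef, ENNReal.ofReal_mul (by positivity), ENNReal.ofReal_natCast,
            ENNReal.ofReal_add zero_le_one hC, ENNReal.ofReal_one]
  have hBpos : 0 < B := by
    rw [hBdef]
    have h2n : (0:ℝ) < ((2*n : ℕ) : ℝ) := by
      have : 0 < 2*n := by omega
      exact_mod_cast this
    nlinarith
  refine ⟨⟨B, hBpos, fun α _ => key α⟩, ?_⟩
  intro γ hγ0 hγ1 α hα
  have hpt : ∀ ω, PI.lyap γ (X α (PI.sampleTime (X α) 0 ω) ω)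
      ≤ ∑ i, ((X α (PI.sampleTime (X α) 0 ω) ω).1 i : ℝ≥0∞)^2 := by
    intro ω
    refine Finset.sum_le_sum (fun i _ => ?_)
    set k : ℕ := (X α (PI.sampleTime (X α) 0 ω) ω).1 i with hk
    rcases Nat.eq_zero_or_pos k with h | h
    · rw [h]
      simp only [Nat.cast_zero]
      rw [ENNReal.zero_rpow_of_pos (by linarith)]
      exact zero_le
    · have h1 : (1:ℝ≥0∞) ≤ (k:ℝ≥0∞) := by exact_mod_cast h
      calc (k:ℝ≥0∞)^((1:ℝ)+γ) ≤ (k:ℝ≥0∞)^(((2:ℕ):ℝ)) :=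
            ENNReal.rpow_le_rpow_of_exponent_le h1 (by push_cast; linarith)
        _ = (k:ℝ≥0∞)^(2:ℕ) := ENNReal.rpow_natCast _ 2
  have hle := (lintegral_mono hpt).trans (key α)
  exact ne_top_of_le_ne_top (ENNReal.mul_ne_top ENNReal.ofReal_ne_top
    (by simp [ENNReal.pow_ne_top, ENNReal.natCast_ne_top])) hle
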